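/- Suppose b, c ∈ M = {x : Ψ(x) = 0} are both nearest points on M to a point x (so ‖x−b‖ = ‖x−c‖ = d(x,M)), with x − b = G_Ψ(b)ᵀ t_b for some t_b ∈ ℝ^s, ‖Ψ(c) − Ψ(b) − G_Ψ(b)(c−b)‖ ≤ (K/2)‖b−c‖², and K‖t_b‖ < 1. Then b = c. -/

import Mathlib

open Metric Set

/-- If `b, c ∈ M = {x : Ψ x = 0}` are both nearest points on `M` to a
point `x` (so `‖x−b‖ = ‖x−c‖ = d(x,M)`), if `x − b = G_Ψ(b)ᵀ t_b` for some `t_b ∈ ℝ^s`,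
if the quadratic Taylor bound `‖Ψ c − Ψ b − G_Ψ(b)(c−b)‖ ≤ (K/2)‖b−c‖²` holds, and if
`K ‖t_b‖ < 1`, then `b = c`. -/
theorem unique_projection_of_small_curvature
    (d s : ℕ)
    (Ψ : EuclideanSpace ℝ (Fin d) → EuclideanSpace ℝ (Fin s))
    (M : Set (EuclideanSpace ℝ (Fin d)))
    (hM : M = {x | Ψ x = 0})
    (x b c : EuclideanSpace ℝ (Fin d)) (tb : EuclideanSpace ℝ (Fin s))
    (Gb : EuclideanSpace ℝ (Fin d) →L[ℝ] EuclideanSpace ℝ (Fin s))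
    (hGb : Gb = fderiv ℝ Ψ b)
    (hb : b ∈ M) (hc : c ∈ M)
    (hbproj : dist x b = infDist x M) (hcproj : dist x c = infDist x M)
    (htb : x - b = (ContinuousLinearMap.adjoint Gb) tb)
    (K : ℝ) (hK : 0 < K)
    (hTaylor : ‖Ψ c - Ψ b - Gb (c - b)‖ ≤ K / 2 * ‖b - c‖ ^ 2)
    (hsmall : K * ‖tb‖ < 1) :
    b = c := by
  have hψb : Ψ b = 0 := by rw [hM] at hb; exact hb
  have hψc : Ψ c = 0 := by rw [hM] at hc; exact hc
  have hG : ‖Gb (c - b)‖ ≤ K / 2 * ‖b - c‖ ^ 2 := by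
    have : ‖Gb (c - b)‖ = ‖Ψ c - Ψ b - Gb (c - b)‖ := by
      rw [hψb, hψc]; simp [norm_sub_rev]
    rw [this]; exact hTaylor
  have hdist : ‖x - b‖ = ‖x - c‖ := by
    rw [dist_eq_norm] at hbproj hcproj
    rw [hbproj, hcproj]
  have hinner : (inner ℝ (x - b) (c - b) : ℝ) = (inner ℝ (tb) (Gb (c - b)) : ℝ) := by
    rw [htb, ContinuousLinearMap.adjoint_inner_left]
  have hxc : x - c = (x - b) - (c - b) := by abel
  have hsq : ‖x - c‖ ^ 2 =
      ‖x - b‖ ^ 2 - 2 * (inner ℝ (x - b) (c - b) : ℝ) + ‖c - b‖ ^ 2 := by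
    rw [hxc, @norm_sub_sq_real]
  have hdist2 : ‖x - b‖ ^ 2 = ‖x - c‖ ^ 2 := by rw [hdist]
  have key : ‖c - b‖ ^ 2 = 2 * (inner ℝ (tb) (Gb (c - b)) : ℝ) := by
    rw [← hinner]; linarith
  have hCS : (inner ℝ (tb) (Gb (c - b)) : ℝ) ≤ ‖tb‖ * ‖Gb (c - b)‖ := real_inner_le_norm _ _
  have hnormrev : ‖b - c‖ = ‖c - b‖ := norm_sub_rev _ _
  rw [hnormrev] at hG
  have h1 : (inner ℝ (tb) (Gb (c - b)) : ℝ) ≤ ‖tb‖ * (K / 2 * ‖c - b‖ ^ 2) :=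
    le_trans hCS (mul_le_mul_of_nonneg_left hG (norm_nonneg tb))
  by_contra hne
  have hA : 0 < ‖c - b‖ ^ 2 := by
    have h : c - b ≠ 0 := sub_ne_zero.mpr (fun h => hne h.symm)
    have := norm_pos_iff.mpr h
    positivity
  have h2 : K * ‖tb‖ * ‖c - b‖ ^ 2 < 1 * ‖c - b‖ ^ 2 :=
    mul_lt_mul_of_pos_right hsmall hA
  linarith
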